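/- Let k ≥ 2 be an integer and let G be a finite simple bipartite graph with maximum degree Δ. If G contains no cycle on 2k vertices and no cycle on 2k+2 vertices as a subgraph, then ω₂'(G) ≤ max{kΔ, 2k(k − 1)}. -/

import Mathlib

open SimpleGraph

/-- `G.ContainsSub H` means `G` contains a copy of `H` as a (not necessarily induced)
subgraph, i.e. there is an injective graph homomorphism from `H` to `G`. -/
def SimpleGraph.ContainsSub {V W : Type*} (G : SimpleGraph V) (H : SimpleGraph W) : Prop :=
  ∃ f : W → V, Function.Injective f ∧ ∀ a b, H.Adj a b → G.Adj (f a) (f b)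

/-- A strong clique of `G`: a set of edges of `G` any two distinct members of which
either share an endpoint or have endpoints joined by an edge of `G`. -/
def SimpleGraph.IsStrongClique {V : Type*} (G : SimpleGraph V) (F : Finset (Sym2 V)) : Prop :=
  (F : Set (Sym2 V)) ⊆ G.edgeSet ∧
    ∀ e ∈ F, ∀ f ∈ F, e ≠ f → ∃ x ∈ e, ∃ y ∈ f, x = y ∨ G.Adj x y

/-- The strong clique number `ω₂'(G)`: the largest cardinality of a strong clique. -/
noncomputable def SimpleGraph.strongCliqueNumber {V : Type*} (G : SimpleGraph V) : ℕ :=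
  sSup {n | ∃ F : Finset (Sym2 V), G.IsStrongClique F ∧ F.card = n}



open List in
lemma insert_chain_aux {α : Type*} (r : α → α → Prop) :
    ∀ (l : List α) (x : α), l.Chain' r → (∀ a ∈ l, r x a ∨ r a x) →
    ∃ l' : List α, l'.Perm (x :: l) ∧ l'.Chain' r ∧ (l'.head? = l.head? ∨ l'.head? = some x) := by
  intro l
  induction l with
  | nil => exact fun x _ _ => ⟨[x], .refl _, List.isChain_singleton x, Or.inr rfl⟩
  | cons a tl ih =>
    intro x hc hx
    rcases hx a List.mem_cons_self with h | h
    · exact ⟨x :: a :: tl, .refl _, List.isChain_cons_cons.2 ⟨h, hc⟩, Or.inr rfl⟩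
    · obtain ⟨l2, hperm, hchain, hhead⟩ := ih x hc.tail
        (fun b hb => hx b (List.mem_cons_of_mem _ hb))
      refine ⟨a :: l2, ?_, ?_, Or.inl rfl⟩
      · exact (hperm.cons a).trans (List.Perm.swap _ _ _)
      · show List.IsChain r (a :: l2)
        rw [List.isChain_cons]
        refine ⟨?_, hchain⟩
        intro y hy
        rcases hhead with hh | hh
        · rw [hh] at hy
          cases tl with
          | nil => simp at hy
          | cons c tc =>
            simp only [List.head?_cons, Option.mem_def, Option.some.injEq] at hy
            subst hy
            exact (List.isChain_cons_cons.1 hc).1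
        · rw [hh] at hy
          simp only [Option.mem_def, Option.some.injEq] at hy
          subst hy
          exact h

lemma exists_chain_perm {α : Type*} (r : α → α → Prop) :
    ∀ l : List α, l.Pairwise (fun a b => r a b ∨ r b a) → ∃ l' : List α, l'.Perm l ∧ l'.Chain' r := by
  intro l
  induction l with
  | nil => exact fun _ => ⟨[], .refl _, List.IsChain.nil⟩
  | cons a tl ih =>
    intro hp
    obtain ⟨l2, hperm, hchain⟩ := ih hp.of_cons
    obtain ⟨l3, hperm3, hchain3, _⟩ := insert_chain_aux r l2 a hchain
      (fun b hb => (List.rel_of_pairwise_cons hp (hperm.mem_iff.1 hb)))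
    exact ⟨l3, hperm3.trans (hperm.cons a), hchain3⟩

lemma fin_succ_val {n : ℕ} [NeZero n] (hn : 2 ≤ n) (v : Fin n) :
    (v + 1).val = (v.val + 1) % n := by
  rw [Fin.add_def, Fin.val_one']
  rw [Nat.mod_eq_of_lt (show 1 < n by omega)]

lemma fin_eq_add_one_of_sub {n : ℕ} [NeZero n] (hn : 2 ≤ n) (u v : Fin n)
    (h : (u - v).val = 1) : u.val = (v.val + 1) % n := by
  rw [Fin.sub_def] at h
  simp only [Fin.val_mk] at h
  have hu := u.isLt
  have hv := v.isLt
  have hnn : (0:ℕ) < n := by omega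
  rcases Nat.lt_or_ge (n - v.val + u.val) n with hlt | hge
  · rw [Nat.mod_eq_of_lt hlt] at h
    have : v.val = n - 1 ∧ u.val = 0 := by omega
    rw [this.1, this.2]
    have h3 : n - 1 + 1 = n := by omega
    rw [h3, Nat.mod_self]
  · have h2 : n - v.val + u.val < 2 * n := by omega
    rw [Nat.mod_eq_sub_mod hge, Nat.mod_eq_of_lt (by omega)] at h
    have huv : u.val = v.val + 1 := by omega
    rw [huv, Nat.mod_eq_of_lt (by omega)]

/-- Build a `2t`-cycle in `G` from sequences `a b : ℕ → V` with
`a 0 - b 0 - a 1 - b 1 - ⋯ - a (t-1) - b (t-1) - a 0`. -/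
lemma containsSub_cycle_of_seq {V : Type*} (G : SimpleGraph V) (t : ℕ) (ht : 2 ≤ t)
    (a b : ℕ → V)
    (hab : ∀ i, i < t → G.Adj (a i) (b i))
    (hba : ∀ i, i < t → G.Adj (b i) (a ((i + 1) % t)))
    (hainj : ∀ i j, i < t → j < t → a i = a j → i = j)
    (hbinj : ∀ i j, i < t → j < t → b i = b j → i = j)
    (hne : ∀ i j, i < t → j < t → a i ≠ b j) :
    G.ContainsSub (cycleGraph (2 * t)) := by
  haveI : NeZero (2 * t) := ⟨by omega⟩
  set n := 2 * t with hn
  have hn2 : 2 ≤ n := by omega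
  refine ⟨fun j => if j.val % 2 = 0 then a (j.val / 2) else b (j.val / 2), ?_, ?_⟩
  · intro u v h
    simp only at h
    have hj : u.val < n := u.isLt
    have hj' : v.val < n := v.isLt
    set j := u.val with hju
    set j' := v.val with hjv
    have hj2 : j / 2 < t := by omega
    have hj'2 : j' / 2 < t := by omega
    rcases Nat.eq_zero_or_pos (j % 2) with h0 | h0 <;>
      rcases Nat.eq_zero_or_pos (j' % 2) with h0' | h0'
    · rw [if_pos h0, if_pos h0'] at h
      have := hainj _ _ hj2 hj'2 h
      exact Fin.ext (show j = j' by omega)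
    · rw [if_pos h0, if_neg (by omega)] at h
      exact absurd h (hne _ _ hj2 hj'2)
    · rw [if_neg (by omega), if_pos h0'] at h
      exact absurd h.symm (hne _ _ hj'2 hj2)
    · rw [if_neg (by omega), if_neg (by omega)] at h
      have := hbinj _ _ hj2 hj'2 h
      exact Fin.ext (show j = j' by omega)
  · have key : ∀ w : Fin n, G.Adj
        (if w.val % 2 = 0 then a (w.val / 2) else b (w.val / 2))
        (if (w+1).val % 2 = 0 then a ((w+1).val / 2) else b ((w+1).val / 2)) := by
      intro w
      have hw := w.isLt
      have hw1 : (w + 1).val = (w.val + 1) % n := fin_succ_val hn2 w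
      rcases Nat.eq_zero_or_pos (w.val % 2) with h0 | h0
      · -- w even, w.val = 2i, i < t
        have hlt : w.val + 1 < n := by omega
        rw [hw1, Nat.mod_eq_of_lt hlt]
        rw [if_pos h0, if_neg (by omega)]
        have : (w.val + 1) / 2 = w.val / 2 := by omega
        rw [this]
        exact hab _ (by omega)
      · -- w odd
        rw [if_neg (by omega)]
        rcases Nat.lt_or_ge (w.val + 1) n with hlt | hge
        · rw [hw1, Nat.mod_eq_of_lt hlt, if_pos (by omega)]
          have h1 : (w.val + 1) / 2 = (w.val / 2 + 1) % t := by
            have : w.val / 2 + 1 < t := by omega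
            rw [Nat.mod_eq_of_lt this]; omega
          rw [h1]
          exact hba _ (by omega)
        · -- w.val = n - 1
          have hw' : w.val = n - 1 := by omega
          have : (w.val + 1) % n = 0 := by
            rw [hw']
            have : n - 1 + 1 = n := by omega
            rw [this, Nat.mod_self]
          rw [hw1, this, if_pos (by omega)]
          have h1 : (0:ℕ) / 2 = (w.val / 2 + 1) % t := by
            have : w.val / 2 = t - 1 := by omega
            rw [this]
            have : t - 1 + 1 = t := by omega
            rw [this, Nat.mod_self]
          rw [h1]
          exact hba _ (by omega)
    intro u v huv
    rw [cycleGraph_adj'] at huv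
    rcases huv with h | h
    · have := fin_eq_add_one_of_sub hn2 u v h
      have : u = v + 1 := Fin.ext (by rw [fin_succ_val hn2 v]; exact this)
      rw [this]
      simpa using (key v).symm
    · have := fin_eq_add_one_of_sub hn2 v u h
      have : v = u + 1 := Fin.ext (by rw [fin_succ_val hn2 u]; exact this)
      rw [this]
      simpa using key u

lemma no_big_matching {V : Type*} [DecidableEq V] (G : SimpleGraph V) (k : ℕ) (hk : 2 ≤ k)
    (h1 : ¬ G.ContainsSub (cycleGraph (2 * k)))
    (h2 : ¬ G.ContainsSub (cycleGraph (2 * k + 2)))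
    (C : V → Fin 2) (hC : ∀ u v, G.Adj u v → C u ≠ C v)
    (M : Finset (V × V))
    (hadj : ∀ p ∈ M, G.Adj p.1 p.2)
    (hcol : ∀ p ∈ M, C p.1 = 0)
    (hdisj : ∀ p ∈ M, ∀ q ∈ M, p ≠ q → p.1 ≠ q.1 ∧ p.2 ≠ q.2)
    (hstrong : ∀ p ∈ M, ∀ q ∈ M, p ≠ q → G.Adj p.1 q.2 ∨ G.Adj q.1 p.2) :
    M.card ≤ k := by
  by_contra hcard
  push_neg at hcard
  obtain ⟨M', hM'sub, hM'card⟩ := Finset.exists_subset_card_eq (show k + 1 ≤ M.card by omega)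
  have hcol2 : ∀ p ∈ M, C p.2 ≠ 0 := by
    intro p hp h
    exact hC _ _ (hadj p hp) ((hcol p hp).trans h.symm)
  set r : V × V → V × V → Prop := fun p q => G.Adj p.1 q.2 with hr
  have hpw : M'.toList.Pairwise (fun p q => r p q ∨ r q p) := by
    refine List.Pairwise.imp_of_mem ?_ M'.nodup_toList
    intro p q hp hq hne
    exact hstrong p (hM'sub (Finset.mem_toList.1 hp)) q (hM'sub (Finset.mem_toList.1 hq)) hne
  obtain ⟨l, hperm, hchain⟩ := exists_chain_perm r M'.toList hpw
  have hlen : l.length = k + 1 := by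
    rw [hperm.length_eq, Finset.length_toList, hM'card]
  have hpos : 0 < k + 1 := Nat.succ_pos k
  set E : ℕ → V × V := fun i => l.get ⟨i % (k + 1), by rw [hlen]; exact Nat.mod_lt _ hpos⟩
    with hE
  have hEeq : ∀ i, i < k + 1 → ∀ (h : i < l.length), E i = l.get ⟨i, h⟩ := by
    intro i hi h
    simp only [hE]
    congr 1
    exact Fin.ext (Nat.mod_eq_of_lt hi)
  have hEmemM : ∀ i, E i ∈ M := by
    intro i
    apply hM'sub
    rw [← Finset.mem_toList, ← hperm.mem_iff]
    exact l.get_mem _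
  have hnd : l.Nodup := hperm.nodup_iff.2 M'.nodup_toList
  have hEinj : ∀ i j, i < k + 1 → j < k + 1 → E i = E j → i = j := by
    intro i j hi hj h
    rw [hEeq i hi (by omega), hEeq j hj (by omega)] at h
    have := (List.Nodup.get_inj_iff hnd).1 h
    exact Fin.val_eq_val _ _ |>.2 this
  have hchain' : ∀ i, i + 1 < k + 1 → G.Adj (E i).1 (E (i + 1)).2 := by
    intro i hi
    have h2' : i + 1 < l.length := by omega
    have := List.isChain_iff_getElem.1 hchain i (by omega)
    rw [hEeq i (by omega) (by omega), hEeq (i + 1) hi h2']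
    exact this
  -- coordinates distinct for distinct indices
  have hfst : ∀ i j, i < k + 1 → j < k + 1 → (E i).1 = (E j).1 → i = j := by
    intro i j hi hj h
    by_contra hne
    have hEne : E i ≠ E j := fun hh => hne (hEinj i j hi hj hh)
    exact (hdisj _ (hEmemM i) _ (hEmemM j) hEne).1 h
  have hsnd : ∀ i j, i < k + 1 → j < k + 1 → (E i).2 = (E j).2 → i = j := by
    intro i j hi hj h
    by_contra hne
    have hEne : E i ≠ E j := fun hh => hne (hEinj i j hi hj hh)
    exact (hdisj _ (hEmemM i) _ (hEmemM j) hEne).2 h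
  have hcolE1 : ∀ i, C (E i).1 = 0 := fun i => hcol _ (hEmemM i)
  have hcolE2 : ∀ i, C (E i).2 ≠ 0 := fun i => hcol2 _ (hEmemM i)
  have hne0k : E 0 ≠ E k := fun h => by have := hEinj 0 k (by omega) (by omega) h; omega
  rcases hstrong _ (hEmemM 0) _ (hEmemM k) hne0k with hcase | hcase
  · -- G.Adj (E 0).1 (E k).2 : build C_{2k}
    apply h1
    apply containsSub_cycle_of_seq G k hk (fun i => (E i).1) (fun i => (E (i + 1)).2)
    · intro i hi
      exact hchain' i (by omega)
    · intro i hi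
      rcases Nat.lt_or_ge (i + 1) k with h | h
      · rw [Nat.mod_eq_of_lt h]
        exact (hadj _ (hEmemM (i + 1))).symm
      · have : i + 1 = k := by omega
        rw [this, Nat.mod_self]
        exact hcase.symm
    · intro i j hi hj h
      exact hfst i j (by omega) (by omega) h
    · intro i j hi hj h
      have := hsnd (i + 1) (j + 1) (by omega) (by omega) h
      omega
    · intro i j hi hj h
      exact hcolE2 (j + 1) (by rw [← h, hcolE1 i])
  · -- G.Adj (E k).1 (E 0).2 : build C_{2k+2}
    have h2' : ¬ G.ContainsSub (cycleGraph (2 * (k + 1))) := by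
      have : 2 * (k + 1) = 2 * k + 2 := by ring
      rw [this]; exact h2
    apply h2'
    apply containsSub_cycle_of_seq G (k + 1) (by omega) (fun i => (E i).1)
      (fun i => (E ((i + 1) % (k + 1))).2)
    · intro i hi
      rcases Nat.lt_or_ge (i + 1) (k + 1) with h | h
      · rw [Nat.mod_eq_of_lt h]
        exact hchain' i h
      · have : i + 1 = k + 1 := by omega
        rw [this, Nat.mod_self]
        have : i = k := by omega
        rw [this]
        exact hcase
    · intro i hi
      exact (hadj _ (hEmemM ((i + 1) % (k + 1)))).symm
    · intro i j hi hj h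
      exact hfst i j hi hj h
    · intro i j hi hj h
      have hmod : (i + 1) % (k + 1) = (j + 1) % (k + 1) :=
        hsnd _ _ (Nat.mod_lt _ hpos) (Nat.mod_lt _ hpos) h
      rcases Nat.lt_or_ge (i + 1) (k + 1) with hi' | hi' <;>
        rcases Nat.lt_or_ge (j + 1) (k + 1) with hj' | hj'
      · rw [Nat.mod_eq_of_lt hi', Nat.mod_eq_of_lt hj'] at hmod; omega
      · rw [Nat.mod_eq_of_lt hi', show j + 1 = k + 1 by omega, Nat.mod_self] at hmod
        omega
      · rw [Nat.mod_eq_of_lt hj', show i + 1 = k + 1 by omega, Nat.mod_self] at hmod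
        omega
      · omega
    · intro i j hi hj h
      exact hcolE2 _ (by rw [← h, hcolE1 i])
  

lemma exists_small_cover {V : Type*} [DecidableEq V]
    (P : Finset (V × V)) (k : ℕ)
    (hmatch : ∀ M : Finset (V × V), M ⊆ P →
      (∀ p ∈ M, ∀ q ∈ M, p ≠ q → p.1 ≠ q.1 ∧ p.2 ≠ q.2) → M.card ≤ k) :
    ∃ W : Finset V, W.card ≤ k ∧ ∀ p ∈ P, p.1 ∈ W ∨ p.2 ∈ W := by
  classical
  set AA : Finset V := P.image Prod.fst with hAA
  set N : Finset V → Finset V := fun S => (P.filter (fun p => p.1 ∈ S)).image Prod.snd with hN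
  set g : Finset V → ℤ := fun S => (S.card : ℤ) - ((N S).card : ℤ) with hg
  obtain ⟨S₀, hS₀mem, hS₀max⟩ := Finset.exists_max_image AA.powerset g ⟨∅, by simp⟩
  have hS₀sub : S₀ ⊆ AA := Finset.mem_powerset.1 hS₀mem
  have hg0 : 0 ≤ g S₀ := by
    have := hS₀max ∅ (by simp)
    simp only [hg, Finset.card_empty, hN] at this ⊢
    have hNe : (P.filter (fun p => p.1 ∈ (∅ : Finset V))).image Prod.snd = ∅ := by
      simp
    rw [hNe] at this
    simpa using this
  set D : ℕ := (g S₀).toNat with hD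
  have hDg : (D : ℤ) = g S₀ := Int.toNat_of_nonneg hg0
  -- Hall condition data
  set t : {x // x ∈ AA} → Finset (V ⊕ ℕ) :=
    fun a => ((N {a.val}).image Sum.inl) ∪ ((Finset.range D).image Sum.inr) with ht
  have hhall : ∀ s : Finset {x // x ∈ AA}, s.card ≤ (s.biUnion t).card := by
    intro s
    rcases s.eq_empty_or_nonempty with rfl | hs
    · simp
    · set S : Finset V := s.image (fun a => a.val) with hS
      have hScard : S.card = s.card := Finset.card_image_of_injective _ Subtype.val_injective
      have hSsub : S ⊆ AA := by
        intro x hx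
        simp only [hS, Finset.mem_image] at hx
        obtain ⟨a, _, rfl⟩ := hx
        exact a.property
      have hsubset : ((N S).image Sum.inl) ∪ ((Finset.range D).image Sum.inr) ⊆
          s.biUnion t := by
        intro x hx
        rcases Finset.mem_union.1 hx with hx | hx
        · simp only [Finset.mem_image] at hx
          obtain ⟨b, hb, rfl⟩ := hx
          simp only [hN, Finset.mem_image, Finset.mem_filter] at hb
          obtain ⟨p, ⟨hpP, hp1⟩, rfl⟩ := hb
          simp only [hS, Finset.mem_image] at hp1
          obtain ⟨a, ha, ha1⟩ := hp1
          refine Finset.mem_biUnion.2 ⟨a, ha, ?_⟩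
          simp only [ht, Finset.mem_union, Finset.mem_image]
          exact Or.inl ⟨p.2, by
            simp only [hN, Finset.mem_image, Finset.mem_filter]
            exact ⟨p, ⟨hpP, by simp [ha1]⟩, rfl⟩, rfl⟩
        · obtain ⟨a, ha⟩ := hs
          refine Finset.mem_biUnion.2 ⟨a, ha, ?_⟩
          simp only [ht, Finset.mem_union]
          exact Or.inr hx
      have hdisjoint : Disjoint ((N S).image Sum.inl) ((Finset.range D).image Sum.inr) := by
        rw [Finset.disjoint_left]
        intro x hx hx'
        simp only [Finset.mem_image] at hx hx'
        obtain ⟨b, _, rfl⟩ := hx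
        obtain ⟨c, _, hc⟩ := hx'
        simp at hc
      have hcardun : (((N S).image Sum.inl) ∪ ((Finset.range D).image Sum.inr)).card
          = (N S).card + D := by
        rw [Finset.card_union_of_disjoint hdisjoint,
          Finset.card_image_of_injective _ Sum.inl_injective,
          Finset.card_image_of_injective _ Sum.inr_injective, Finset.card_range]
      have hHallS : (S.card : ℤ) ≤ ((N S).card : ℤ) + D := by
        have h5 := hS₀max S (Finset.mem_powerset.2 hSsub)
        simp only [hg] at h5
        have h6 : (D : ℤ) = (S₀.card : ℤ) - ((N S₀).card : ℤ) := hDg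
        omega
      calc s.card = S.card := hScard.symm
        _ ≤ (N S).card + D := by exact_mod_cast hHallS
        _ = (((N S).image Sum.inl) ∪ ((Finset.range D).image Sum.inr)).card := hcardun.symm
        _ ≤ (s.biUnion t).card := Finset.card_le_card hsubset
  obtain ⟨f, hfinj, hft⟩ := (Finset.all_card_le_biUnion_card_iff_exists_injective t).1 hhall
  -- extract the matching
  set Mset : Finset {x // x ∈ AA} := AA.attach.filter (fun a => (f a).isLeft) with hMset
  set q : {x // x ∈ AA} → V × V := fun a => (a.val, ((f a).getLeft?).getD a.val) with hq
  have hqP : ∀ a ∈ Mset, q a ∈ P ∧ Sum.inl (q a).2 = f a := by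
    intro a ha
    simp only [hMset, Finset.mem_filter] at ha
    obtain ⟨b, hb⟩ := Sum.isLeft_iff.1 ha.2
    have hbt := hft a
    rw [hb] at hbt
    simp only [ht, Finset.mem_union, Finset.mem_image] at hbt
    rcases hbt with ⟨c, hc, hceq⟩ | ⟨c, _, hceq⟩
    · have hcb : c = b := by simpa using hceq
      subst hcb
      simp only [hN, Finset.mem_image, Finset.mem_filter] at hc
      obtain ⟨p, ⟨hpP, hp1⟩, hp2⟩ := hc
      simp only [Finset.mem_singleton] at hp1
      have hqa : q a = p := by
        simp only [hq, hb]
        simp only [Sum.getLeft?]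
        exact Prod.ext (by simp [hp1]) (by simp [hp2])
      rw [hqa, hb]
      exact ⟨hpP, by rw [← hp2]⟩
    · exact absurd hceq (by simp)
  have hqinj1 : ∀ a ∈ Mset, ∀ a' ∈ Mset, q a = q a' → a = a' := by
    intro a _ a' _ h
    have : a.val = a'.val := congrArg Prod.fst h
    exact Subtype.ext this
  set M : Finset (V × V) := Mset.image q with hM
  have hMsub : M ⊆ P := by
    intro p hp
    simp only [hM, Finset.mem_image] at hp
    obtain ⟨a, ha, rfl⟩ := hp
    exact (hqP a ha).1
  have hMmatch : ∀ p ∈ M, ∀ p' ∈ M, p ≠ p' → p.1 ≠ p'.1 ∧ p.2 ≠ p'.2 := by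
    intro p hp p' hp' hne
    simp only [hM, Finset.mem_image] at hp hp'
    obtain ⟨a, ha, rfl⟩ := hp
    obtain ⟨a', ha', rfl⟩ := hp'
    have hane : a ≠ a' := fun h => hne (by rw [h])
    constructor
    · intro h
      exact hane (Subtype.ext h)
    · intro h
      apply hane
      apply hfinj
      rw [← (hqP a ha).2, ← (hqP a' ha').2, h]
  have hMcard : M.card = Mset.card := Finset.card_image_of_injOn hqinj1
  have hMk : M.card ≤ k := hmatch M hMsub hMmatch
  -- Mset.card ≥ AA.card - D
  have hMsetcard : AA.card ≤ Mset.card + D := by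
    have hsplit : AA.attach.card = Mset.card + (AA.attach.filter (fun a => ¬ (f a).isLeft)).card := by
      rw [hMset]
      exact (Finset.card_filter_add_card_filter_not _).symm
    have hrest : (AA.attach.filter (fun a => ¬ (f a).isLeft)).card ≤ D := by
      have : ∀ a ∈ AA.attach.filter (fun a => ¬ (f a).isLeft),
          f a ∈ (Finset.range D).image Sum.inr := by
        intro a ha
        simp only [Finset.mem_filter] at ha
        have hbt := hft a
        simp only [ht, Finset.mem_union] at hbt
        rcases hbt with h | h
        · exfalso
          apply ha.2
          simp only [Finset.mem_image] at h
          obtain ⟨b, _, hb⟩ := h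
          rw [← hb]
          simp
        · exact h
      calc (AA.attach.filter (fun a => ¬ (f a).isLeft)).card
          ≤ ((Finset.range D).image Sum.inr).card :=
            Finset.card_le_card_of_injOn f (fun a ha => this a ha)
              (fun a _ a' _ h => hfinj h)
        _ ≤ D := by
            rw [Finset.card_image_of_injective _ Sum.inr_injective, Finset.card_range]
    rw [Finset.card_attach] at hsplit
    omega
  -- the cover
  refine ⟨(AA \ S₀) ∪ N S₀, ?_, ?_⟩
  · have h1 : ((AA \ S₀) ∪ N S₀).card ≤ (AA.card - S₀.card) + (N S₀).card := by
      calc ((AA \ S₀) ∪ N S₀).card ≤ (AA \ S₀).card + (N S₀).card := Finset.card_union_le _ _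
        _ = (AA.card - S₀.card) + (N S₀).card := by rw [Finset.card_sdiff_of_subset hS₀sub]
    have h2 : (N S₀).card + D = S₀.card := by
      have : (D : ℤ) = (S₀.card : ℤ) - ((N S₀).card : ℤ) := hDg
      omega
    have h3 : S₀.card ≤ AA.card := Finset.card_le_card hS₀sub
    omega
  · intro p hp
    by_cases h : p.1 ∈ S₀
    · right
      apply Finset.mem_union_right
      simp only [hN, Finset.mem_image, Finset.mem_filter]
      exact ⟨p, ⟨hp, h⟩, rfl⟩
    · left
      apply Finset.mem_union_left
      rw [Finset.mem_sdiff]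
      exact ⟨Finset.mem_image_of_mem _ hp, h⟩


/-- Theorem 5.2: if `k ≥ 2` and `G` is a `{C_{2k}, C_{2k+2}}`-free bipartite graph with
maximum degree `Δ`, then `ω₂'(G) ≤ max {kΔ, 2k(k - 1)}`. -/
theorem strongCliqueNumber_le_of_bipartite {V : Type*} [Fintype V] [DecidableEq V]
    (k : ℕ) (hk : 2 ≤ k) (G : SimpleGraph V) [DecidableRel G.Adj]
    (hbip : G.Colorable 2)
    (Δ : ℕ) (hΔ : G.maxDegree = Δ)
    (h1 : ¬ G.ContainsSub (cycleGraph (2 * k)))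
    (h2 : ¬ G.ContainsSub (cycleGraph (2 * k + 2))) :
    G.strongCliqueNumber ≤ max (k * Δ) (2 * k * (k - 1)) := by
  have hbound : ∀ F : Finset (Sym2 V), G.IsStrongClique F → F.card ≤ k * Δ := by
    intro F hF
    obtain ⟨C⟩ := hbip
    have hCvalid : ∀ u v, G.Adj u v → C u ≠ C v := fun u v h => C.valid h
    have fin2 : ∀ x : Fin 2, x = 0 ∨ x = 1 := by decide
    set P : Finset (V × V) := Finset.univ.filter
      (fun p : V × V => s(p.1, p.2) ∈ F ∧ G.Adj p.1 p.2 ∧ C p.1 = 0) with hP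
    have hPmem : ∀ p : V × V, p ∈ P ↔ s(p.1, p.2) ∈ F ∧ G.Adj p.1 p.2 ∧ C p.1 = 0 := by
      intro p
      simp [hP, Finset.mem_filter]
    have hPcol2 : ∀ p ∈ P, C p.2 = 1 := by
      intro p hp
      rw [hPmem] at hp
      rcases fin2 (C p.2) with h | h
      · exact absurd (hp.2.2.trans h.symm) (hCvalid _ _ hp.2.1)
      · exact h
    have hinjOn : Set.InjOn (fun p : V × V => s(p.1, p.2)) ↑P := by
      intro p hp q hq h
      simp only [Sym2.eq_iff] at h
      rcases h with ⟨h1', h2'⟩ | ⟨h1', h2'⟩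
      · exact Prod.ext h1' h2'
      · exfalso
        have hc1 : C p.1 = 0 := ((hPmem p).1 hp).2.2
        have hc2 : C q.2 = 1 := hPcol2 q hq
        rw [h1'] at hc1
        rw [hc1] at hc2
        exact absurd hc2 (by decide)
    have hsurj : F = P.image (fun p : V × V => s(p.1, p.2)) := by
      ext e
      constructor
      · intro he
        have heE : e ∈ G.edgeSet := hF.1 he
        induction e using Sym2.ind with
        | _ x y =>
          rw [SimpleGraph.mem_edgeSet] at heE
          rcases fin2 (C x) with h | h
          · exact Finset.mem_image.2 ⟨(x, y), (hPmem (x, y)).2 ⟨he, heE, h⟩, rfl⟩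
          · have hy : C y = 0 := by
              rcases fin2 (C y) with h' | h'
              · exact h'
              · exact absurd (h.trans h'.symm) (hCvalid _ _ heE)
            refine Finset.mem_image.2 ⟨(y, x), (hPmem (y, x)).2 ⟨?_, heE.symm, hy⟩, ?_⟩
            · rwa [Sym2.eq_swap]
            · rw [Sym2.eq_swap]
      · intro he
        obtain ⟨p, hp, rfl⟩ := Finset.mem_image.1 he
        exact ((hPmem p).1 hp).1
    have hcard : F.card = P.card := by
      rw [hsurj, Finset.card_image_of_injOn hinjOn]
    have hstrongP : ∀ p ∈ P, ∀ q ∈ P, p ≠ q →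
        p.1 = q.1 ∨ p.2 = q.2 ∨ G.Adj p.1 q.2 ∨ G.Adj q.1 p.2 := by
      intro p hp q hq hne
      have hene : s(p.1, p.2) ≠ s(q.1, q.2) := by
        intro h
        exact hne (hinjOn (Finset.mem_coe.2 hp) (Finset.mem_coe.2 hq) h)
      obtain ⟨x, hx, y, hy, hxy⟩ := hF.2 _ ((hPmem p).1 hp).1 _ ((hPmem q).1 hq).1 hene
      have hcp1 : C p.1 = 0 := ((hPmem p).1 hp).2.2
      have hcp2 : C p.2 = 1 := hPcol2 p hp
      have hcq1 : C q.1 = 0 := ((hPmem q).1 hq).2.2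
      have hcq2 : C q.2 = 1 := hPcol2 q hq
      rw [Sym2.mem_iff] at hx hy
      rcases hx with rfl | rfl <;> rcases hy with rfl | rfl <;> rcases hxy with h | h
      · exact Or.inl h
      · exact absurd (hCvalid _ _ h) (by rw [hcp1, hcq1]; simp)
      · exfalso; rw [h, hcq2] at hcp1; exact absurd hcp1 (by decide)
      · exact Or.inr (Or.inr (Or.inl h))
      · exfalso; rw [h, hcq1] at hcp2; exact absurd hcp2 (by decide)
      · exact Or.inr (Or.inr (Or.inr h.symm))
      · exact Or.inr (Or.inl h)
      · exact absurd (hCvalid _ _ h) (by rw [hcp2, hcq2]; simp)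
    have hmatch : ∀ M : Finset (V × V), M ⊆ P →
        (∀ p ∈ M, ∀ q ∈ M, p ≠ q → p.1 ≠ q.1 ∧ p.2 ≠ q.2) → M.card ≤ k := by
      intro M hMP hMdisj
      apply no_big_matching G k hk h1 h2 C hCvalid M
      · exact fun p hp => ((hPmem p).1 (hMP hp)).2.1
      · exact fun p hp => ((hPmem p).1 (hMP hp)).2.2
      · exact hMdisj
      · intro p hp q hq hne
        rcases hstrongP p (hMP hp) q (hMP hq) hne with h | h | h | h
        · exact absurd h (hMdisj p hp q hq hne).1
        · exact absurd h (hMdisj p hp q hq hne).2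
        · exact Or.inl h
        · exact Or.inr h
    obtain ⟨W, hWk, hWcov⟩ := exists_small_cover P k hmatch
    -- counting
    have hcount : P.card ≤ W.card * Δ := by
      set hfun : V × V → V := fun p => if p.1 ∈ W then p.1 else p.2 with hhfun
      have hsub : P ⊆ W.biUnion (fun w => P.filter (fun p => hfun p = w)) := by
        intro p hp
        refine Finset.mem_biUnion.2 ⟨hfun p, ?_, Finset.mem_filter.2 ⟨hp, rfl⟩⟩
        simp only [hhfun]
        split
        · assumption
        · rcases hWcov p hp with h | h
          · contradiction
          · exact h
      have hterm : ∀ w ∈ W, (P.filter (fun p => hfun p = w)).card ≤ Δ := by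
        intro w hw
        have hdeg : (P.filter (fun p => hfun p = w)).card ≤ G.degree w := by
          rw [← SimpleGraph.card_neighborFinset_eq_degree]
          apply Finset.card_le_card_of_injOn (fun p => if p.1 = w then p.2 else p.1)
          · intro p hp
            rw [Finset.mem_coe, Finset.mem_filter] at hp
            obtain ⟨hpP, hpw⟩ := hp
            have hadj := ((hPmem p).1 hpP).2.1
            by_cases h : p.1 = w
            · simp only [if_pos h]
              rw [Finset.mem_coe, SimpleGraph.mem_neighborFinset]
              exact h ▸ hadj
            · simp only [if_neg h]
              have hp2 : p.2 = w := by
                simp only [hhfun] at hpw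
                by_cases h' : p.1 ∈ W
                · rw [if_pos h'] at hpw; exact absurd hpw h
                · rwa [if_neg h'] at hpw
              rw [Finset.mem_coe, SimpleGraph.mem_neighborFinset]
              exact (hp2 ▸ hadj).symm
          · intro p hp q hq himg
            have himg2 : (if p.1 = w then p.2 else p.1) = (if q.1 = w then q.2 else q.1) := himg
            clear himg
            rename' himg2 => himg
            simp only [Finset.mem_coe, Finset.mem_filter] at hp hq
            obtain ⟨hpP, hpw⟩ := hp
            obtain ⟨hqP, hqw⟩ := hq
            have hp2w : p.1 ≠ w → p.2 = w := by
              intro h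
              simp only [hhfun] at hpw
              by_cases h' : p.1 ∈ W
              · rw [if_pos h'] at hpw; exact absurd hpw h
              · rwa [if_neg h'] at hpw
            have hq2w : q.1 ≠ w → q.2 = w := by
              intro h
              simp only [hhfun] at hqw
              by_cases h' : q.1 ∈ W
              · rw [if_pos h'] at hqw; exact absurd hqw h
              · rwa [if_neg h'] at hqw
            by_cases h : p.1 = w <;> by_cases h' : q.1 = w
            · rw [if_pos h, if_pos h'] at himg
              exact Prod.ext (h.trans h'.symm) himg
            · exfalso
              rw [if_pos h, if_neg h'] at himg
              have hc1 : C p.2 = 1 := hPcol2 p hpP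
              have hc2 : C q.2 = 1 := hPcol2 q hqP
              have hc3 : C q.1 = 0 := ((hPmem q).1 hqP).2.2
              rw [hq2w h', ← h] at hc2
              have hc4 : C p.1 = 0 := ((hPmem p).1 hpP).2.2
              rw [hc4] at hc2
              exact absurd hc2 (by decide)
            · exfalso
              rw [if_neg h, if_pos h'] at himg
              have hc2 : C p.2 = 1 := hPcol2 p hpP
              rw [hp2w h, ← h'] at hc2
              have hc4 : C q.1 = 0 := ((hPmem q).1 hqP).2.2
              rw [hc4] at hc2
              exact absurd hc2 (by decide)
            · rw [if_neg h, if_neg h'] at himg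
              exact Prod.ext himg ((hp2w h).trans (hq2w h').symm)
        calc (P.filter (fun p => hfun p = w)).card ≤ G.degree w := hdeg
          _ ≤ G.maxDegree := G.degree_le_maxDegree w
          _ = Δ := hΔ
      calc P.card ≤ (W.biUnion (fun w => P.filter (fun p => hfun p = w))).card :=
            Finset.card_le_card hsub
        _ ≤ ∑ w ∈ W, (P.filter (fun p => hfun p = w)).card := Finset.card_biUnion_le
        _ ≤ W.card * Δ := by
            have := Finset.sum_le_card_nsmul W (fun w => (P.filter (fun p => hfun p = w)).card)
              Δ hterm
            simpa [smul_eq_mul] using this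
    calc F.card = P.card := hcard
      _ ≤ W.card * Δ := hcount
      _ ≤ k * Δ := Nat.mul_le_mul_right Δ hWk
  rw [SimpleGraph.strongCliqueNumber]
  apply csSup_le
  · refine ⟨0, ∅, ⟨?_, ?_⟩, rfl⟩
    · simp
    · intro e he
      simp at he
  · rintro n ⟨F, hF, rfl⟩
    exact le_trans (hbound F hF) (le_max_left _ _)
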